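/- Let φ, φ₀ : ℝ → ℝ be differentiable functions with φ(0) ≤ 0 and φ₀(0) ≤ 0, and suppose that for all t, whenever max(φ(t), φ₀(t)) = 0 we have (φ₀(t) = 0 → φ₀'(t) ≤ -c) and (φ(t) = 0 → φ'(t) ≤ -c) for some c > 0. Then for all t ≥ 0, max(φ(t), φ₀(t)) ≤ 0. -/
import Mathlib

open Filter Set Topology

lemma aux_neg_right (f : ℝ → ℝ) (hf : Differentiable ℝ f) (s c : ℝ) (hc : 0 < c)
    (h : f s = 0 → deriv f s ≤ -c) (hle : f s ≤ 0) :
    ∀ᶠ t in 𝓝[>] s, f t < 0 := by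
  rcases lt_or_eq_of_le hle with hlt | heq
  · have : ∀ᶠ t in 𝓝 s, f t < 0 :=
      (hf.continuous.continuousAt (x := s)) (Iio_mem_nhds hlt)
    exact this.filter_mono nhdsWithin_le_nhds
  · have hd : deriv f s ≤ -c := h heq
    have hD : HasDerivAt f (deriv f s) s := (hf s).hasDerivAt
    have hslope : Tendsto (slope f s) (𝓝[≠] s) (𝓝 (deriv f s)) :=
      hasDerivAt_iff_tendsto_slope.mp hD
    have hslope' : Tendsto (slope f s) (𝓝[>] s) (𝓝 (deriv f s)) :=
      hslope.mono_left (nhdsWithin_mono _ fun x hx => ne_of_gt hx)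
    have hev : ∀ᶠ t in 𝓝[>] s, slope f s t < 0 :=
      hslope' (Iio_mem_nhds (by linarith))
    filter_upwards [hev, self_mem_nhdsWithin] with t ht hts
    rw [slope_def_field] at ht
    have hts' : (0:ℝ) < t - s := sub_pos.mpr hts
    rcases div_neg_iff.mp ht with ⟨_, h2⟩ | ⟨h1, _⟩
    · linarith
    · linarith [heq]

theorem stmt_7 (φ φ₀ : ℝ → ℝ) (c : ℝ) (hc : 0 < c)
    (hφ : Differentiable ℝ φ) (hφ₀ : Differentiable ℝ φ₀)
    (h0 : φ 0 ≤ 0) (h0' : φ₀ 0 ≤ 0)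
    (hdec : ∀ t, max (φ t) (φ₀ t) = 0 →
      (φ₀ t = 0 → deriv φ₀ t ≤ -c) ∧ (φ t = 0 → deriv φ t ≤ -c)) :
    ∀ t, 0 ≤ t → max (φ t) (φ₀ t) ≤ 0 := by
  intro t₁ ht₁
  by_contra hpos
  push_neg at hpos
  set ψ : ℝ → ℝ := fun t => max (φ t) (φ₀ t) with hψdef
  have hψcont : Continuous ψ := hφ.continuous.max hφ₀.continuous
  set A : Set ℝ := Icc 0 t₁ ∩ {t | ψ t ≤ 0} with hAdef
  have hA0 : (0:ℝ) ∈ A := ⟨⟨le_refl 0, ht₁⟩, max_le h0 h0'⟩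
  have hAclosed : IsClosed A :=
    isClosed_Icc.inter (isClosed_le hψcont continuous_const)
  have hAcomp : IsCompact A :=
    isCompact_Icc.of_isClosed_subset hAclosed inter_subset_left
  have hAbdd : BddAbove A := ⟨t₁, fun x hx => hx.1.2⟩
  set s := sSup A with hsdef
  have hsA : s ∈ A := hAcomp.sSup_mem ⟨0, hA0⟩
  have hst : s < t₁ := lt_of_le_of_ne hsA.1.2 (by
    intro h
    have := hsA.2
    rw [h] at this
    exact absurd hpos (not_lt.mpr this))
  have hIoc : ∀ u ∈ Ioc s t₁, 0 < ψ u := by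
    intro u ⟨hsu, hut⟩
    by_contra hψu
    push_neg at hψu
    have huA : u ∈ A := ⟨⟨le_trans hsA.1.1 hsu.le, hut⟩, hψu⟩
    exact absurd (le_csSup hAbdd huA) (not_le.mpr hsu)
  have hψs0 : ψ s = 0 := by
    refine le_antisymm hsA.2 ?_
    have htd : Tendsto ψ (𝓝[>] s) (𝓝 (ψ s)) :=
      (hψcont.continuousAt (x := s)).continuousWithinAt
    refine ge_of_tendsto htd ?_
    filter_upwards [Ioo_mem_nhdsGT_of_mem ⟨le_refl s, hst⟩] with u hu
    exact (hIoc u ⟨hu.1, hu.2.le⟩).le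
  have hpair := hdec s hψs0
  have hφs : φ s ≤ 0 := le_trans (le_max_left _ _) hψs0.le
  have hφ₀s : φ₀ s ≤ 0 := le_trans (le_max_right _ _) hψs0.le
  have e1 : ∀ᶠ t in 𝓝[>] s, φ t < 0 := aux_neg_right φ hφ s c hc hpair.2 hφs
  have e2 : ∀ᶠ t in 𝓝[>] s, φ₀ t < 0 := aux_neg_right φ₀ hφ₀ s c hc hpair.1 hφ₀s
  have e3 : ∀ᶠ t in 𝓝[>] s, ψ t < 0 := by
    filter_upwards [e1, e2] with t h1 h2
    exact max_lt h1 h2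
  obtain ⟨u, hu1, hu2⟩ := (e3.and (Ioo_mem_nhdsGT_of_mem ⟨le_refl s, hst⟩)).exists
  exact absurd (hIoc u ⟨hu2.1, hu2.2.le⟩) (not_lt.mpr hu1.le)
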